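/- arXiv:0909.2879 — 6 statements merged into one kernel-verified Lean document; each statement's English description precedes it below -/
import Mathlib

section
/- Every connected balanced directed multigraph with at least one edge admits an Eulerian circuit: there exists a list e₁, …, e_N (with N = |E|) containing every edge of E exactly once, such that t eᵢ = s eᵢ₊₁ for all 1 ≤ i < N and t e_N = s e₁. -/
open List Finset

section Euler
set_option linter.unusedSectionVars false
variable {V E : Type*} [DecidableEq V] [DecidableEq E] [Fintype E] (s t : E → V)

private lemma cnt_map' {E V : Type*} [DecidableEq V] (f : E → V) (L : List E) (v : V) :
    (L.map f).count v = L.countP (fun e => f e = v) := by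
  simp only [List.count, List.countP_map]
  exact List.countP_congr (fun a _ => by simp [Function.comp])

private lemma walk_key : ∀ (L : List E) (h : L ≠ []),
    L.Chain' (fun e e' => t e = s e') →
    s (L.head h) :: L.map t = L.map s ++ [t (L.getLast h)]
  | [e], _, _ => by simp
  | (e :: e' :: L), h, hc => by
    obtain ⟨h1, hc'⟩ := List.isChain_cons_cons.mp hc
    have ih := walk_key (e' :: L) (by simp) hc'
    simp only [List.map_cons, List.head_cons, List.getLast_cons_cons] at *
    rw [List.cons_append, ← ih, h1]

private lemma walk_count (L : List E) (h : L ≠ [])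
    (hc : L.Chain' (fun e e' => t e = s e')) (v : V) :
    L.countP (fun e => t e = v) + (if s (L.head h) = v then 1 else 0) =
      L.countP (fun e => s e = v) + (if t (L.getLast h) = v then 1 else 0) := by
  have key := walk_key s t L h hc
  have hcount := congrArg (fun l => l.count v) key
  simp only [List.count_cons, List.count_append, List.count_singleton', List.count_nil,
    cnt_map', beq_iff_eq] at hcount
  omega

private lemma closed_count (L : List E) (h : L ≠ [])
    (hc : L.Chain' (fun e e' => t e = s e'))
    (hcl : t (L.getLast h) = s (L.head h)) (v : V) :
    L.countP (fun e => t e = v) = L.countP (fun e => s e = v) := by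
  have := walk_count s t L h hc v
  rw [hcl] at this
  omega

private lemma nodup_countP {E : Type*} [DecidableEq E] (p : E → Prop) [DecidablePred p] :
    ∀ (L : List E), L.Nodup → (L.toFinset.filter p).card = L.countP (fun e => p e)
  | [], _ => by simp
  | (e :: L), hL => by
    obtain ⟨he, hL'⟩ := List.nodup_cons.mp hL
    rw [List.toFinset_cons, Finset.filter_insert, List.countP_cons]
    by_cases hp : p e
    · rw [if_pos hp, Finset.card_insert_of_notMem (by simp [he]),
        nodup_countP p L hL']
      simp [hp]
    · rw [if_neg hp, nodup_countP p L hL']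
      simp [hp]

private lemma split_card (R S : Finset E) (hS : S ⊆ R) (p : E → Prop) [DecidablePred p] :
    (R.filter p).card = (S.filter p).card + ((R \ S).filter p).card := by
  rw [← Finset.card_union_of_disjoint, ← Finset.filter_union,
    Finset.union_sdiff_of_subset hS]
  exact Finset.disjoint_filter_filter (Finset.disjoint_sdiff)

private lemma ext_edge (R : Finset E)
    (hbal : ∀ v, (R.filter fun e => t e = v).card = (R.filter fun e => s e = v).card)
    (L : List E) (h : L ≠ []) (hnd : L.Nodup) (hsub : ∀ e ∈ L, e ∈ R)
    (hc : L.Chain' (fun e e' => t e = s e'))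
    (hcl : ¬ t (L.getLast h) = s (L.head h)) :
    ∃ e', e' ∈ R ∧ e' ∉ L ∧ s e' = t (L.getLast h) := by
  set w := t (L.getLast h) with hw
  have hcount := walk_count s t L h hc w
  rw [if_pos rfl, if_neg (fun heq => hcl (heq.symm))] at hcount
  have hsubF : L.toFinset ⊆ R := fun e he => hsub e (List.mem_toFinset.mp he)
  have hA := nodup_countP (fun e => t e = w) L hnd
  have hB := nodup_countP (fun e => s e = w) L hnd
  have h1 := split_card R L.toFinset hsubF (fun e => t e = w)
  have h2 := split_card R L.toFinset hsubF (fun e => s e = w)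
  have hb := hbal w
  have hY : 0 < (((R \ L.toFinset)).filter (fun e => s e = w)).card := by
    rw [hA] at h1
    rw [hB] at h2
    rw [h1, h2] at hb
    beta_reduce at hb
    omega
  obtain ⟨e', he'⟩ := Finset.card_pos.mp hY
  simp only [Finset.mem_filter, Finset.mem_sdiff, List.mem_toFinset] at he'
  exact ⟨e', he'.1.1, he'.1.2, he'.2⟩

/-- Extension: any trail in a balanced edge set extends to a closed trail. -/
private lemma extend_aux (R : Finset E)
    (hbal : ∀ v, (R.filter fun e => t e = v).card = (R.filter fun e => s e = v).card) :
    ∀ (n : ℕ) (L : List E) (h : L ≠ []), L.Nodup → (∀ e ∈ L, e ∈ R) →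
      L.Chain' (fun e e' => t e = s e') → R.card - L.length ≤ n →
      ∃ (C : List E) (hC : C ≠ []), C.Nodup ∧ (∀ e ∈ C, e ∈ R) ∧
        C.Chain' (fun e e' => t e = s e') ∧
        t (C.getLast hC) = s (C.head hC) ∧ s (C.head hC) = s (L.head h) := by
  intro n
  induction n with
  | zero =>
    intro L h hnd hsub hc hlen
    by_cases hcl : t (L.getLast h) = s (L.head h)
    · exact ⟨L, h, hnd, hsub, hc, hcl, rfl⟩
    · exfalso
      obtain ⟨e', he'R, he'L, -⟩ := ext_edge s t R hbal L h hnd hsub hc hcl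
      have h1 : insert e' L.toFinset ⊆ R := by
        intro x hx
        rcases Finset.mem_insert.mp hx with rfl | hx
        · exact he'R
        · exact hsub x (List.mem_toFinset.mp hx)
      have h2 : (insert e' L.toFinset).card = L.length + 1 := by
        rw [Finset.card_insert_of_notMem (by simpa using he'L),
          List.toFinset_card_of_nodup hnd]
      have := Finset.card_le_card h1
      omega
  | succ n ih =>
    intro L h hnd hsub hc hlen
    by_cases hcl : t (L.getLast h) = s (L.head h)
    · exact ⟨L, h, hnd, hsub, hc, hcl, rfl⟩
    · obtain ⟨e', he'R, he'L, he's⟩ := ext_edge s t R hbal L h hnd hsub hc hcl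
      have hM : (L ++ [e']) ≠ [] := by simp
      have hMnd : (L ++ [e']).Nodup := by
        rw [List.nodup_append']
        exact ⟨hnd, List.nodup_singleton e', by simpa using he'L⟩
      have hMsub : ∀ e ∈ L ++ [e'], e ∈ R := by
        intro e he
        rcases List.mem_append.mp he with he | he
        · exact hsub e he
        · simp at he; exact he ▸ he'R
      have hMc : (L ++ [e']).Chain' (fun e e' => t e = s e') := by
        refine List.isChain_append.mpr ?_
        refine ⟨hc, List.isChain_singleton e', ?_⟩
        intro x hx y hy
        rw [List.getLast?_eq_getLast h] at hx
        simp at hx hy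
        rw [← hx, ← hy]
        exact he's.symm
      have hins : insert e' L.toFinset ⊆ R := by
        intro x hx
        rcases Finset.mem_insert.mp hx with rfl | hx
        · exact he'R
        · exact hsub x (List.mem_toFinset.mp hx)
      have hcard : (insert e' L.toFinset).card = L.length + 1 := by
        rw [Finset.card_insert_of_notMem (by simpa using he'L),
          List.toFinset_card_of_nodup hnd]
      have hle := Finset.card_le_card hins
      have hMlen : R.card - (L ++ [e']).length ≤ n := by
        rw [List.length_append]
        simp only [List.length_singleton]
        omega
      obtain ⟨C, hC, p1, p2, p3, p4, p5⟩ := ih (L ++ [e']) hM hMnd hMsub hMc hMlen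
      refine ⟨C, hC, p1, p2, p3, p4, ?_⟩
      rw [p5]
      congr 1
      exact List.head_append_of_ne_nil h

private lemma exists_closed (R : Finset E)
    (hbal : ∀ v, (R.filter fun e => t e = v).card = (R.filter fun e => s e = v).card)
    (e0 : E) (he0 : e0 ∈ R) :
    ∃ (C : List E) (hC : C ≠ []), C.Nodup ∧ (∀ e ∈ C, e ∈ R) ∧
      C.Chain' (fun e e' => t e = s e') ∧
      t (C.getLast hC) = s (C.head hC) ∧ s (C.head hC) = s e0 := by
  obtain ⟨C, hC, p1, p2, p3, p4, p5⟩ := extend_aux s t R hbal R.card [e0] (by simp)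
    (List.nodup_singleton e0) (by simpa using he0) (List.isChain_singleton e0) (by simp)
  exact ⟨C, hC, p1, p2, p3, p4, by simpa using p5⟩

private lemma rotate_closed {α : Type*} (r : α → α → Prop) (A B : List α) (x : α)
    (hc : (A ++ x :: B).Chain' r)
    (hcl : ∀ a ∈ (A ++ x :: B).getLast?, ∀ b ∈ (A ++ x :: B).head?, r a b) :
    ((x :: B) ++ A).Chain' r ∧
      ∀ a ∈ ((x :: B) ++ A).getLast?, ∀ b ∈ ((x :: B) ++ A).head?, r a b := by
  cases A with
  | nil => exact ⟨by simpa using hc, by simpa using hcl⟩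
  | cons a A' =>
    obtain ⟨hA, hxB, hlink⟩ := List.isChain_append.mp hc
    constructor
    · refine List.isChain_append.mpr ?_
      refine ⟨hxB, hA, ?_⟩
      intro p hp q hq
      apply hcl
      · rw [List.getLast?_append_cons]; exact hp
      · simp only [List.cons_append, List.head?_cons]
        simpa using hq
    · intro p hp q hq
      rw [List.getLast?_append_cons] at hp
      have hq' : x = q := by simpa using hq
      subst hq'
      exact hlink p hp _ (by simp)

private lemma succ_mem (L : List E) (h : L ≠ [])
    (hc : L.Chain' (fun e e' => t e = s e'))
    (hcl : t (L.getLast h) = s (L.head h)) (e : E) (he : e ∈ L) :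
    ∃ e' ∈ L, t e = s e' := by
  obtain ⟨A, B, rfl⟩ := List.append_of_mem he
  cases B with
  | nil =>
    have hlast : (A ++ [e]).getLast h = e := by
      rw [List.getLast_append_of_right_ne_nil A [e] (by simp)]
      rfl
    rw [hlast] at hcl
    exact ⟨(A ++ [e]).head h, List.head_mem h, hcl⟩
  | cons b B' =>
    exact ⟨b, by simp, (List.isChain_append_cons_cons.mp hc).2.1⟩

private lemma compl_bal
    (balanced : ∀ v : V, (Finset.univ.filter fun e => t e = v).card =
      (Finset.univ.filter fun e => s e = v).card)
    (L : List E) (h : L ≠ []) (hnd : L.Nodup)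
    (hc : L.Chain' (fun e e' => t e = s e'))
    (hcl : t (L.getLast h) = s (L.head h)) (v : V) :
    (((Finset.univ.filter fun e => e ∉ L)).filter fun e => t e = v).card =
      (((Finset.univ.filter fun e => e ∉ L)).filter fun e => s e = v).card := by
  have hsd : (Finset.univ : Finset E) \ L.toFinset = Finset.univ.filter fun e => e ∉ L := by
    ext e; simp
  have h1 := split_card (Finset.univ : Finset E) L.toFinset (Finset.subset_univ _)
    (fun e => t e = v)
  have h2 := split_card (Finset.univ : Finset E) L.toFinset (Finset.subset_univ _)
    (fun e => s e = v)
  rw [hsd] at h1 h2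
  rw [nodup_countP _ L hnd] at h1 h2
  have hb := balanced v
  have hcc := closed_count s t L h hc hcl v
  omega

private lemma grow [Fintype V]
    (balanced : ∀ v : V, (Finset.univ.filter fun e => t e = v).card =
      (Finset.univ.filter fun e => s e = v).card)
    (connected : ∀ a b : V,
      Relation.EqvGen (fun a b : V => ∃ e : E, s e = a ∧ t e = b) a b) :
    ∀ (n : ℕ) (L : List E) (h : L ≠ []), L.Nodup →
      L.Chain' (fun e e' => t e = s e') →
      t (L.getLast h) = s (L.head h) →
      Fintype.card E - L.length ≤ n →
      ∃ M : List E, M.Nodup ∧ (∀ e : E, e ∈ M) ∧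
        M.Chain' (fun e e' => t e = s e') ∧
        ∃ hM : M ≠ [], t (M.getLast hM) = s (M.head hM) := by
  intro n
  have hfull : ∀ (L : List E), L ≠ [] → L.Nodup → Fintype.card E ≤ L.length →
      ∀ e : E, e ∈ L := by
    intro L h hnd hlen e
    have h1 : L.toFinset.card = L.length := List.toFinset_card_of_nodup hnd
    have h2 : L.toFinset = Finset.univ := by
      apply Finset.eq_univ_of_card
      have := Finset.card_le_card (Finset.subset_univ L.toFinset)
      rw [Finset.card_univ] at this
      omega
    rw [← List.mem_toFinset, h2]
    exact Finset.mem_univ e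
  induction n with
  | zero =>
    intro L h hnd hc hcl hlen
    exact ⟨L, hnd, hfull L h hnd (by omega), hc, h, hcl⟩
  | succ n ih =>
    intro L h hnd hc hcl hlen
    by_cases hall : ∀ e : E, e ∈ L
    · exact ⟨L, hnd, hall, hc, h, hcl⟩
    push_neg at hall
    obtain ⟨e0, he0⟩ := hall
    set R : Finset E := Finset.univ.filter fun e => e ∉ L with hR
    have hRbal := compl_bal s t balanced L h hnd hc hcl
    have hmain : ∃ e, e ∉ L ∧ ∃ x ∈ L, s x = s e := by
      by_contra hno
      push_neg at hno
      have hnt : ∀ e, e ∉ L → ∀ x ∈ L, s x ≠ t e := by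
        intro e heL x hxL hst
        have h1 : e ∈ R.filter fun e' => t e' = t e := by simp [hR, heL]
        have hpos : 0 < (R.filter fun e' => s e' = t e).card := by
          rw [← hRbal (t e)]
          exact Finset.card_pos.mpr ⟨e, h1⟩
        obtain ⟨e'', he''⟩ := Finset.card_pos.mp hpos
        simp only [hR, Finset.mem_filter, Finset.mem_univ, true_and] at he''
        exact hno e'' he''.1 x hxL (by rw [hst, ← he''.2])
      have hinv : ∀ a b, Relation.EqvGen (fun a b : V => ∃ e : E, s e = a ∧ t e = b) a b →
          ((∃ x ∈ L, s x = a) ↔ (∃ x ∈ L, s x = b)) := by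
        intro a b hab
        induction hab with
        | rel a b hr =>
          obtain ⟨e, hsa, htb⟩ := hr
          by_cases heL : e ∈ L
          · constructor
            · intro _
              obtain ⟨e', he'L, hte⟩ := succ_mem s t L h hc hcl e heL
              exact ⟨e', he'L, by rw [← hte, htb]⟩
            · intro _
              exact ⟨e, heL, hsa⟩
          · constructor
            · rintro ⟨x, hxL, hx⟩
              exact absurd (by rw [hx, ← hsa] : s x = s e) (hno e heL x hxL)
            · rintro ⟨x, hxL, hx⟩
              exact absurd (by rw [hx, ← htb] : s x = t e) (hnt e heL x hxL)
        | refl a => exact Iff.rfl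
        | symm a b _ ihab => exact ihab.symm
        | trans a b c _ _ ih1 ih2 => exact ih1.trans ih2
      have hmem := (hinv (s e0) (s (L.head h)) (connected _ _)).mpr
        ⟨L.head h, List.head_mem h, rfl⟩
      obtain ⟨x, hxL, hx⟩ := hmem
      exact hno e0 he0 x hxL hx
    obtain ⟨e1, he1L, x, hxL, hxe1⟩ := hmain
    have he1R : e1 ∈ R := by simp [hR, he1L]
    obtain ⟨C, hCne, c1, c2, c3, c4, c5⟩ := exists_closed s t R hRbal e1 he1R
    obtain ⟨A, B, rfl⟩ := List.append_of_mem hxL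
    have hcl' : ∀ a ∈ (A ++ x :: B).getLast?, ∀ b ∈ (A ++ x :: B).head?, t a = s b := by
      intro a ha b hb
      rw [List.getLast?_eq_getLast h] at ha
      rw [List.head?_eq_head h] at hb
      simp only [Option.mem_def, Option.some_inj] at ha hb
      rw [← ha, ← hb]
      exact hcl
    obtain ⟨hrc, hrcl⟩ := rotate_closed (fun e e' => t e = s e') A B x hc hcl'
    set L' := (x :: B) ++ A with hL'
    have hL'ne : L' ≠ [] := by simp [hL']
    have hperm : (A ++ x :: B).Perm L' := List.perm_append_comm
    have hL'nd : L'.Nodup := hperm.nodup_iff.mp hnd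
    have hMne : C ++ L' ≠ [] := by simp [hCne]
    have hdisj : ∀ e ∈ C, e ∉ L' := by
      intro e heC heL'
      have := c2 e heC
      simp only [hR, Finset.mem_filter, Finset.mem_univ, true_and] at this
      exact this (hperm.mem_iff.mpr heL')
    have hMnd : (C ++ L').Nodup := by
      rw [List.nodup_append']
      exact ⟨c1, hL'nd, hdisj⟩
    have hMc : (C ++ L').Chain' (fun e e' => t e = s e') := by
      refine List.isChain_append.mpr ?_
      refine ⟨c3, hrc, ?_⟩
      intro p hp q hq
      rw [List.getLast?_eq_getLast hCne] at hp
      rw [List.head?_eq_head hL'ne] at hq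
      simp only [Option.mem_def, Option.some_inj] at hp hq
      have hq' : q = x := by rw [← hq]; simp [hL']
      rw [← hp, hq', c4, c5, ← hxe1]
    have hMcl : t ((C ++ L').getLast hMne) = s ((C ++ L').head hMne) := by
      have hlast : (C ++ L').getLast hMne = L'.getLast hL'ne :=
        List.getLast_append_of_right_ne_nil C L' hL'ne
      have hhead : (C ++ L').head hMne = C.head hCne :=
        List.head_append_of_ne_nil hCne
      rw [hlast, hhead]
      have := hrcl (L'.getLast hL'ne) (by rw [List.getLast?_eq_getLast hL'ne]; rfl)
        (L'.head hL'ne) (by rw [List.head?_eq_head hL'ne]; rfl)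
      rw [this]
      have hhx : L'.head hL'ne = x := by simp [hL']
      rw [hhx, hxe1, ← c5]
    have hMlen : Fintype.card E - (C ++ L').length ≤ n := by
      have hClen : 1 ≤ C.length := by
        cases C with
        | nil => exact absurd rfl hCne
        | cons _ _ => simp
      have : (C ++ L').length = C.length + (A ++ x :: B).length := by
        rw [List.length_append, hperm.length_eq]
      omega
    exact ih (C ++ L') hMne hMnd hMc hMcl hMlen

end Euler

/-- Every connected balanced directed multigraph with at least one edge admits an
Eulerian circuit: a list of edges containing every edge exactly once, consecutive
edges matching target-to-source, and the target of the last edge equal to the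
source of the first. -/
theorem stmt_0 {V E : Type*} [Fintype V] [Nonempty V] [Fintype E] [Nonempty E]
    [DecidableEq V] (s t : E → V)
    (balanced : ∀ v : V,
      (Finset.univ.filter fun e => t e = v).card =
        (Finset.univ.filter fun e => s e = v).card)
    (connected : ∀ a b : V,
      Relation.EqvGen (fun a b : V => ∃ e : E, s e = a ∧ t e = b) a b) :
    ∃ L : List E, L.length = Fintype.card E ∧ L.Nodup ∧ (∀ e : E, e ∈ L) ∧
      L.Chain' (fun e e' => t e = s e') ∧
      L.getLast?.map t = L.head?.map s := by
  classical
  obtain ⟨e0⟩ := (inferInstance : Nonempty E)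
  obtain ⟨C, hCne, c1, c2, c3, c4, c5⟩ := exists_closed s t Finset.univ
    (by intro v; exact balanced v) e0 (Finset.mem_univ e0)
  obtain ⟨M, m1, m2, m3, hMne, m4⟩ := grow s t balanced connected (Fintype.card E)
    C hCne c1 c3 c4 (by omega)
  refine ⟨M, ?_, m1, m2, m3, ?_⟩
  · have h1 : M.toFinset = Finset.univ := Finset.eq_univ_iff_forall.mpr
      (fun e => List.mem_toFinset.mpr (m2 e))
    have h2 := List.toFinset_card_of_nodup m1
    rw [h1, Finset.card_univ] at h2
    omega
  · rw [List.getLast?_eq_getLast hMne, List.head?_eq_head hMne]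
    simp [m4]
end

section
/- Let V be a finite nonempty type, let n ≥ 1, and let s, t : Fin n → V be source and target maps of a directed multigraph with n edges. Then the multigraph is connected and balanced if and only if there exist a surjective map f : ZMod n → V and a bijection φ : ZMod n ≃ Fin n such that s (φ i) = f i and t (φ i) = f (i + 1) for all i ∈ ZMod n. (Every toric Calabi–Yau quiver diagram is obtained from the cyclically directed n-gon by identifying vertices, and conversely.) -/
open List Finset

section EulerHelpers
variable {V : Type*} [DecidableEq V] {n : ℕ} {s t : Fin n → V}
set_option linter.unusedSectionVars false

lemma countP_eq_card (L : List (Fin n)) (hnd : L.Nodup) (q : Fin n → Prop) [DecidablePred q] :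
    L.countP (fun e => decide (q e)) = (Finset.univ.filter fun e => e ∈ L ∧ q e).card := by
  rw [List.countP_eq_length_filter]
  rw [← List.toFinset_card_of_nodup (hnd.filter _)]
  congr 1
  ext e
  simp [List.mem_filter]

lemma bal_eq (L : List (Fin n)) (hL : L ≠ []) (hc : L.Chain' (fun e e' => t e = s e')) (v : V) :
    (L.countP (fun e => decide (t e = v)) : ℤ) - L.countP (fun e => decide (s e = v)) =
      (if t (L.getLast hL) = v then 1 else 0) - (if s (L.head hL) = v then 1 else 0) := by
  induction L with
  | nil => exact absurd rfl hL
  | cons e L' ih =>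
    rcases eq_or_ne L' [] with rfl | hL'
    · simp [List.countP_cons]
      rfl
    · have hc' : L'.Chain' (fun e e' => t e = s e') := hc.tail
      have hhead : t e = s (L'.head hL') := by
        have := List.isChain_cons.mp hc |>.1
        exact this _ (List.head?_eq_head hL')
      rw [List.getLast_cons hL', List.head_cons]
      have h2 : (L'.countP (fun e => decide (t e = v)) : ℤ)
          - L'.countP (fun e => decide (s e = v)) =
          (if t (L'.getLast hL') = v then 1 else 0)
          - (if s (L'.head hL') = v then 1 else 0) := ih hL' hc'
      rw [List.countP_cons, List.countP_cons]
      push_cast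
      rw [show ((if decide (t e = v) = true then 1 else 0 : ℤ)) = (if t e = v then 1 else 0) by
            simp,
          show ((if decide (s e = v) = true then 1 else 0 : ℤ)) = (if s e = v then 1 else 0) by
            simp]
      rw [hhead]
      linarith [h2]

lemma stuck (P : Fin n → Prop) [DecidablePred P]
    (hbal : ∀ v, (Finset.univ.filter fun e => P e ∧ t e = v).card =
      (Finset.univ.filter fun e => P e ∧ s e = v).card)
    (L : List (Fin n)) (hL : L ≠ []) (hnd : L.Nodup)
    (hc : L.Chain' (fun e e' => t e = s e')) (hP : ∀ e ∈ L, P e)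
    (hstuck : ∀ e, P e → s e = t (L.getLast hL) → e ∈ L) :
    t (L.getLast hL) = s (L.head hL) := by
  by_contra h
  set w := t (L.getLast hL) with hw
  have hcS : L.countP (fun e => decide (s e = w)) =
      (Finset.univ.filter fun e => P e ∧ s e = w).card := by
    rw [countP_eq_card L hnd]
    congr 1
    ext e
    simp only [Finset.mem_filter, Finset.mem_univ, true_and]
    exact ⟨fun ⟨he, hse⟩ => ⟨hP e he, hse⟩, fun ⟨hpe, hse⟩ => ⟨hstuck e hpe hse, hse⟩⟩
  have hcT : L.countP (fun e => decide (t e = w)) ≤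
      (Finset.univ.filter fun e => P e ∧ t e = w).card := by
    rw [countP_eq_card L hnd]
    apply Finset.card_le_card
    intro e he
    simp only [Finset.mem_filter, Finset.mem_univ, true_and] at he ⊢
    exact ⟨hP e he.1, he.2⟩
  have hb := bal_eq (s := s) (t := t) L hL hc w
  rw [if_pos rfl, if_neg (fun hh => h hh.symm)] at hb
  rw [hbal w] at hcT
  omega

lemma exists_closed_trail (P : Fin n → Prop) [DecidablePred P]
    (hbal : ∀ v, (Finset.univ.filter fun e => P e ∧ t e = v).card =
      (Finset.univ.filter fun e => P e ∧ s e = v).card)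
    (e₀ : Fin n) (hP0 : P e₀) :
    ∃ (L : List (Fin n)) (hL : L ≠ []), L.Nodup ∧ L.Chain' (fun e e' => t e = s e') ∧
      (∀ e ∈ L, P e) ∧ t (L.getLast hL) = s (L.head hL) ∧ s (L.head hL) = s e₀ := by
  classical
  set Q : ℕ → Prop := fun m => ∃ (L : List (Fin n)) (hL : L ≠ []), L.Nodup ∧
    L.Chain' (fun e e' => t e = s e') ∧ (∀ e ∈ L, P e) ∧ s (L.head hL) = s e₀ ∧
    L.length = m with hQ
  have hn1 : 1 ≤ n := e₀.pos
  have hQ1 : Q 1 := ⟨[e₀], by simp, by simp, List.isChain_singleton e₀, by simpa, rfl, rfl⟩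
  set m := Nat.findGreatest Q n with hm
  have hm1 : 1 ≤ m := Nat.le_findGreatest hn1 hQ1
  obtain ⟨L, hL, hnd, hc, hP, hhead, hlen⟩ :=
    Nat.findGreatest_of_ne_zero (P := Q) hm.symm (by omega)
  refine ⟨L, hL, hnd, hc, hP, ?_, hhead⟩
  apply stuck P hbal L hL hnd hc hP
  intro e hPe hse
  by_contra heL
  have hnd' : (L ++ [e]).Nodup := by
    rw [List.nodup_append]
    exact ⟨hnd, List.nodup_singleton e, by
      intro a ha b hb hab; rw [List.mem_singleton] at hb; subst hb; subst hab; exact heL ha⟩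
  have hc' : (L ++ [e]).Chain' (fun e e' => t e = s e') := by
    unfold List.Chain'
    rw [List.isChain_append]
    refine ⟨hc, List.isChain_singleton e, ?_⟩
    intro x hx y hy
    simp only [List.head?_cons, Option.mem_def, Option.some.injEq] at hy
    rw [List.getLast?_eq_getLast hL] at hx
    simp only [Option.mem_def, Option.some.injEq] at hx
    subst hx; subst hy
    exact hse.symm
  have hQ' : Q (m + 1) := by
    refine ⟨L ++ [e], by simp, hnd', hc', ?_, ?_, by simp [hlen]⟩
    · intro x hx
      rcases List.mem_append.mp hx with h | h
      · exact hP x h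
      · simp at h; subst h; exact hPe
    · rw [List.head_append_of_ne_nil hL]
      exact hhead
  have hle : m + 1 ≤ n := by
    obtain ⟨L', hL', hnd'', -, -, -, hlen'⟩ := hQ'
    have := hnd''.length_le_card
    simp at this
    omega
  have := Nat.le_findGreatest hle hQ'
  omega

lemma splice (L M : List (Fin n)) (hL : L ≠ []) (hM : M ≠ [])
    (hndL : L.Nodup) (hcL : L.Chain' (fun e e' => t e = s e'))
    (hclL : t (L.getLast hL) = s (L.head hL))
    (hndM : M.Nodup) (hcM : M.Chain' (fun e e' => t e = s e'))
    (hclM : t (M.getLast hM) = s (M.head hM))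
    (hdisj : ∀ e ∈ M, e ∉ L)
    (i : ℕ) (hi : i < L.length)
    (hstart : s (M.head hM) = s (L[i])) :
    ∃ (N : List (Fin n)) (hN : N ≠ []), N.Nodup ∧ N.Chain' (fun e e' => t e = s e') ∧
      t (N.getLast hN) = s (N.head hN) ∧ N.length = L.length + M.length ∧
      ∀ e, e ∈ N ↔ e ∈ L ∨ e ∈ M := by
  have hdropne : L.drop i ≠ [] := by
    simp [List.drop_eq_nil_iff]; omega
  have hheaddrop : (L.drop i).head hdropne = L[i] := by
    rw [List.head_eq_getElem]
    simp
  have hlastdrop : (L.drop i).getLast hdropne = L.getLast hL := by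
    rw [List.getLast_eq_getElem, List.getLast_eq_getElem]
    simp
    congr 1
    omega
  set N := L.take i ++ (M ++ L.drop i) with hN
  have hNne : N ≠ [] := by
    rw [hN]
    intro h
    rw [List.append_eq_nil_iff] at h
    have h2 := h.2
    rw [List.append_eq_nil_iff] at h2
    exact hM h2.1
  have hsplit : ∀ e, e ∈ L ↔ e ∈ L.take i ∨ e ∈ L.drop i := fun e => by
    rw [← List.mem_append, List.take_append_drop]
  have hmemN : ∀ e, e ∈ N ↔ e ∈ L ∨ e ∈ M := by
    intro e
    simp only [hN, List.mem_append]
    have := hsplit e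
    tauto
  have hcL' : (L.take i ++ L.drop i).Chain' (fun e e' => t e = s e') := by
    rw [List.take_append_drop]; exact hcL
  obtain ⟨c1, c2, cj⟩ := List.isChain_append.mp hcL'
  have hcN : N.Chain' (fun e e' => t e = s e') := by
    unfold List.Chain'
    rw [hN, List.isChain_append]
    refine ⟨c1, ?_, ?_⟩
    · rw [List.isChain_append]
      refine ⟨hcM, c2, ?_⟩
      intro x hx y hy
      rw [List.getLast?_eq_getLast hM] at hx
      rw [List.head?_eq_head hdropne] at hy
      simp only [Option.mem_def, Option.some.injEq] at hx hy
      subst hx; subst hy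
      rw [hclM, hstart, hheaddrop]
    · intro x hx y hy
      rw [List.head?_append_of_ne_nil _ hM] at hy
      rw [List.head?_eq_head hM] at hy
      simp only [Option.mem_def, Option.some.injEq] at hy
      subst hy
      rw [hstart, ← hheaddrop]
      exact cj x hx _ (List.head?_eq_head hdropne)
  have hndtd : (L.take i ++ L.drop i).Nodup := by rw [List.take_append_drop]; exact hndL
  rw [List.nodup_append] at hndtd
  have hndN : N.Nodup := by
    rw [hN, List.nodup_append, List.nodup_append]
    refine ⟨hndtd.1, ⟨hndM, hndtd.2.1, ?_⟩, ?_⟩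
    · intro x hxM y hxd hxy
      subst hxy
      exact hdisj x hxM (by rw [← List.take_append_drop i L]; exact List.mem_append_right _ hxd)
    · intro x hxt y hy hxy
      subst hxy
      simp only [List.mem_append] at hy
      rcases hy with (hxM | hxd)
      · exact hdisj x hxM (by rw [← List.take_append_drop i L]; exact List.mem_append_left _ hxt)
      · exact hndtd.2.2 x hxt x hxd rfl
  have hlastN : N.getLast hNne = L.getLast hL := by
    have h1 : N.getLast? = some (L.getLast hL) := by
      rw [hN, List.getLast?_append, List.getLast?_append,
        List.getLast?_eq_getLast hdropne, hlastdrop]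
      simp
    rw [List.getLast?_eq_getLast hNne] at h1
    exact Option.some.inj h1
  have hheadN : s (N.head hNne) = s (L.head hL) := by
    rcases Nat.eq_zero_or_pos i with rfl | hipos
    · have h1 : N.head? = some (M.head hM) := by
        rw [hN, List.head?_append, List.head?_append, List.head?_eq_head hM]
        simp
      rw [List.head?_eq_head hNne] at h1
      rw [Option.some.inj h1, hstart]
      congr 1
      rw [List.head_eq_getElem]
    · have htne : L.take i ≠ [] := by
        rw [Ne, List.take_eq_nil_iff]
        push_neg
        exact ⟨by omega, hL⟩
      have h1 : N.head? = some ((L.take i).head htne) := by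
        rw [hN, List.head?_append, List.head?_eq_head htne]
        simp
      rw [List.head?_eq_head hNne] at h1
      rw [Option.some.inj h1]
      congr 1
      rw [List.head_eq_getElem, List.head_eq_getElem]
      simp
  refine ⟨N, hNne, hndN, hcN, ?_, ?_, hmemN⟩
  · rw [hlastN, hheadN]; exact hclL
  · rw [hN]
    simp [List.length_append, List.length_take, List.length_drop]
    omega

end EulerHelpers

/-- A directed multigraph with `n ≥ 1` edges is connected and balanced if and only
if it is obtained from the cyclically directed `n`-gon by identifying vertices
along a surjective map `f : ZMod n → V`. -/
theorem stmt_3 {V : Type*} [Fintype V] [Nonempty V] [DecidableEq V]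
    (n : ℕ) (hn : 1 ≤ n) (s t : Fin n → V) :
    ((∀ a b : V, Relation.EqvGen (fun a b : V => ∃ e : Fin n, s e = a ∧ t e = b) a b) ∧
      (∀ v : V,
        (Finset.univ.filter fun e => t e = v).card =
          (Finset.univ.filter fun e => s e = v).card)) ↔
    ∃ (f : ZMod n → V) (φ : ZMod n ≃ Fin n), Function.Surjective f ∧
      ∀ i : ZMod n, s (φ i) = f i ∧ t (φ i) = f (i + 1) := by
  classical
  haveI : NeZero n := ⟨by omega⟩
  constructor
  · rintro ⟨hconn, hbal⟩
    -- trivially-weighted balance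
    have hbalT : ∀ v, (Finset.univ.filter fun e : Fin n => True ∧ t e = v).card =
        (Finset.univ.filter fun e => True ∧ s e = v).card := by
      intro v; simpa using hbal v
    obtain ⟨L₀, hL₀, hnd₀, hc₀, -, hcl₀, -⟩ :=
      exists_closed_trail (s := s) (t := t) (fun _ => True) hbalT ⟨0, hn⟩ trivial
    set Q : ℕ → Prop := fun m => ∃ (L : List (Fin n)) (hL : L ≠ []), L.Nodup ∧
      L.Chain' (fun e e' => t e = s e') ∧ t (L.getLast hL) = s (L.head hL) ∧
      L.length = m with hQdef
    have hQ0 : Q L₀.length := ⟨L₀, hL₀, hnd₀, hc₀, hcl₀, rfl⟩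
    have hlen₀n : L₀.length ≤ n := by have := hnd₀.length_le_card; simpa using this
    have hlen₀1 : 1 ≤ L₀.length := List.length_pos_iff.mpr hL₀
    set m := Nat.findGreatest Q n with hm
    have hm1 : 1 ≤ m := le_trans hlen₀1 (Nat.le_findGreatest hlen₀n hQ0)
    obtain ⟨L, hL, hnd, hc, hcl, hlen⟩ := Nat.findGreatest_of_ne_zero (P := Q) hm.symm (by omega)
    -- balance of the closed trail itself
    have hLbal : ∀ v, L.countP (fun e => decide (t e = v)) =
        L.countP (fun e => decide (s e = v)) := by
      intro v
      have h := bal_eq (s := s) (t := t) L hL hc v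
      rw [hcl, sub_self] at h
      omega
    -- every edge is in L
    have hall : ∀ e, e ∈ L := by
      by_contra hne
      push_neg at hne
      obtain ⟨e₁, he₁⟩ := hne
      set InW : V → Prop := fun v => ∃ e ∈ L, s e = v with hInW
      have htargets : ∀ e ∈ L, InW (t e) := by
        intro e he
        rw [List.mem_iff_getElem] at he
        obtain ⟨k, hk, rfl⟩ := he
        rcases lt_or_ge (k + 1) L.length with h | h
        · refine ⟨L[k+1], List.getElem_mem _, ?_⟩
          have := List.isChain_iff_getElem.mp hc k (by omega)
          simpa [List.get_eq_getElem] using this.symm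
        · refine ⟨L.head hL, List.head_mem hL, ?_⟩
          have h1 : L[k] = L.getLast hL := by
            rw [List.getLast_eq_getElem]
            congr 1
            omega
          rw [h1, hcl]
      -- unused edges are balanced
      have hbal' : ∀ v, (Finset.univ.filter fun e => (¬ e ∈ L) ∧ t e = v).card =
          (Finset.univ.filter fun e => (¬ e ∈ L) ∧ s e = v).card := by
        intro v
        have hT := countP_eq_card L hnd (fun e => t e = v)
        have hS := countP_eq_card L hnd (fun e => s e = v)
        have hsplitT : (Finset.univ.filter fun e => t e = v).card =
            (Finset.univ.filter fun e => e ∈ L ∧ t e = v).card +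
            (Finset.univ.filter fun e => (¬ e ∈ L) ∧ t e = v).card := by
          rw [← Finset.card_union_of_disjoint (by
            simp only [Finset.disjoint_left, Finset.mem_filter]
            tauto)]
          congr 1
          ext e
          simp only [Finset.mem_filter, Finset.mem_univ, true_and, Finset.mem_union]
          tauto
        have hsplitS : (Finset.univ.filter fun e => s e = v).card =
            (Finset.univ.filter fun e => e ∈ L ∧ s e = v).card +
            (Finset.univ.filter fun e => (¬ e ∈ L) ∧ s e = v).card := by
          rw [← Finset.card_union_of_disjoint (by
            simp only [Finset.disjoint_left, Finset.mem_filter]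
            tauto)]
          congr 1
          ext e
          simp only [Finset.mem_filter, Finset.mem_univ, true_and, Finset.mem_union]
          tauto
        have hb := hbal v
        have hLb := hLbal v
        omega
      -- some unused edge has its source on the trail
      have hEx2 : ∃ e, (¬ e ∈ L) ∧ InW (s e) := by
        have hEx : ∃ e, (¬ e ∈ L) ∧ (InW (s e) ∨ InW (t e)) := by
          by_contra hno
          push_neg at hno
          have hiff : ∀ a b : V, (∃ e : Fin n, s e = a ∧ t e = b) → (InW a ↔ InW b) := by
            rintro a b ⟨e, rfl, rfl⟩
            by_cases heL : e ∈ L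
            · exact iff_of_true ⟨e, heL, rfl⟩ (htargets e heL)
            · have := hno e heL
              exact iff_of_false (fun h => this.1 h) (fun h => this.2 h)
          have hEq : ∀ a b : V, Relation.EqvGen
              (fun a b : V => ∃ e : Fin n, s e = a ∧ t e = b) a b → (InW a ↔ InW b) := by
            intro a b h
            induction h with
            | rel _ _ h => exact hiff _ _ h
            | refl _ => exact Iff.rfl
            | symm _ _ _ ih => exact ih.symm
            | trans _ _ _ _ _ ih1 ih2 => exact ih1.trans ih2
          have h1 : InW (s (L.head hL)) := ⟨L.head hL, List.head_mem hL, rfl⟩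
          exact (hno e₁ he₁).1 ((hEq _ _ (hconn (s e₁) (s (L.head hL)))).mpr h1)
        obtain ⟨e, heL, hcase⟩ := hEx
        rcases hcase with h | h
        · exact ⟨e, heL, h⟩
        · have hpos : 0 < (Finset.univ.filter fun e' => (¬ e' ∈ L) ∧ t e' = t e).card :=
            Finset.card_pos.mpr ⟨e, by simp [heL]⟩
          rw [hbal' (t e)] at hpos
          obtain ⟨e₂, he₂⟩ := Finset.card_pos.mp hpos
          simp only [Finset.mem_filter, Finset.mem_univ, true_and] at he₂
          exact ⟨e₂, he₂.1, he₂.2 ▸ h⟩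
      obtain ⟨e₂, he₂L, hw⟩ := hEx2
      obtain ⟨e', he'L, hse'⟩ := hw
      rw [List.mem_iff_getElem] at he'L
      obtain ⟨i, hi, rfl⟩ := he'L
      -- closed trail in unused edges starting at s e₂
      obtain ⟨M, hM, hndM, hcM, hPM, hclM, hheadM⟩ :=
        exists_closed_trail (s := s) (t := t) (fun e => ¬ e ∈ L) hbal' e₂ he₂L
      obtain ⟨N, hNne, hndN, hcN, hclN, hlenN, -⟩ :=
        splice (s := s) (t := t) L M hL hM hnd hc hcl hndM hcM hclM hPM i hi
          (by rw [hheadM, hse'])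
      have hQN : Q N.length := ⟨N, hNne, hndN, hcN, hclN, rfl⟩
      have hNn : N.length ≤ n := by have := hndN.length_le_card; simpa using this
      have := Nat.le_findGreatest hNn hQN
      have hM1 : 1 ≤ M.length := List.length_pos_iff.mpr hM
      omega
    -- L is an enumeration of all edges
    have hlenn : L.length = n := by
      have h1 : L.toFinset = Finset.univ := Finset.eq_univ_iff_forall.mpr (by
        intro e; rw [List.mem_toFinset]; exact hall e)
      have h2 := List.toFinset_card_of_nodup hnd
      rw [h1] at h2
      simpa using h2.symm
    -- the wrap-around chain property
    have hkey : ∀ (k : ℕ) (hk1 : k < L.length) (hk2 : (k + 1) % n < L.length),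
        t (L.get ⟨k, hk1⟩) = s (L.get ⟨(k + 1) % n, hk2⟩) := by
      intro k hk1 hk2
      rcases lt_or_ge (k + 1) n with h | h
      · have hmod : (k + 1) % n = k + 1 := Nat.mod_eq_of_lt h
        have h3 := List.isChain_iff_getElem.mp hc k (by omega)
        have h4 : (⟨(k + 1) % n, hk2⟩ : Fin L.length) = ⟨k + 1, by omega⟩ :=
          Fin.mk_eq_mk.mpr hmod
        rw [h4]
        exact h3
      · have hkn : k + 1 = n := by omega
        have hmod : (k + 1) % n = 0 := by rw [hkn, Nat.mod_self]
        have h1 : L.get ⟨k, hk1⟩ = L.getLast hL := by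
          rw [List.getLast_eq_getElem, List.get_eq_getElem]
          congr 1
          show k = L.length - 1
          omega
        have h2 : L.get ⟨(k + 1) % n, hk2⟩ = L.head hL := by
          rw [List.head_eq_getElem, List.get_eq_getElem]
          congr 1
        rw [h1, h2, hcl]
    -- build the equivalence and identification map
    have hval : ∀ i : ZMod n, i.val < L.length := fun i => by
      rw [hlenn]; exact ZMod.val_lt i
    set φ₀ : ZMod n → Fin n := fun i => L.get ⟨i.val, hval i⟩ with hφ₀
    have hinj : Function.Injective φ₀ := by
      intro i j hij
      have hget := List.nodup_iff_injective_get.mp hnd hij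
      have : i.val = j.val := congrArg Fin.val hget
      exact ZMod.val_injective n this
    have hbij : Function.Bijective φ₀ :=
      (Fintype.bijective_iff_injective_and_card φ₀).mpr ⟨hinj, by simp [ZMod.card]⟩
    set φ : ZMod n ≃ Fin n := Equiv.ofBijective φ₀ hbij with hφdef
    set f : ZMod n → V := fun i => s (φ₀ i) with hfdef
    have hvadd : ∀ i : ZMod n, (i + 1).val = (i.val + 1) % n := by
      intro i
      have h1 : (i.val + 1) % n = (i.val % n + 1 % n) % n := Nat.add_mod _ _ _
      rw [ZMod.val_add, ZMod.val_one_eq_one_mod, h1, Nat.mod_eq_of_lt (ZMod.val_lt i)]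
    have hmain : ∀ i : ZMod n, s (φ i) = f i ∧ t (φ i) = f (i + 1) := by
      intro i
      refine ⟨rfl, ?_⟩
      show t (φ₀ i) = s (φ₀ (i + 1))
      rw [hφ₀]
      have h5 : (⟨(i + 1).val, hval (i + 1)⟩ : Fin L.length) =
          ⟨(i.val + 1) % n, by rw [hlenn]; exact Nat.mod_lt _ (by omega)⟩ :=
        Fin.mk_eq_mk.mpr (hvadd i)
      simp only [h5]
      exact hkey i.val (hval i) _
    refine ⟨f, φ, ?_, hmain⟩
    -- surjectivity
    intro v
    have hinc : ∃ e : Fin n, s e = v ∨ t e = v := by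
      by_contra hno
      push_neg at hno
      have hEq : ∀ a b : V, Relation.EqvGen
          (fun a b : V => ∃ e : Fin n, s e = a ∧ t e = b) a b → (a = v ↔ b = v) := by
        intro a b h
        induction h with
        | rel _ _ h =>
          obtain ⟨e, rfl, rfl⟩ := h
          exact iff_of_false (fun hh => (hno e).1 hh) (fun hh => (hno e).2 hh)
        | refl _ => exact Iff.rfl
        | symm _ _ _ ih => exact ih.symm
        | trans _ _ _ _ _ ih1 ih2 => exact ih1.trans ih2
      have := (hEq v (s ⟨0, hn⟩) (hconn v (s ⟨0, hn⟩))).mp rfl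
      exact (hno ⟨0, hn⟩).1 this
    obtain ⟨e, he⟩ := hinc
    rcases he with h | h
    · refine ⟨φ.symm e, ?_⟩
      have : φ (φ.symm e) = e := Equiv.apply_symm_apply φ e
      calc f (φ.symm e) = s (φ (φ.symm e)) := (hmain (φ.symm e)).1.symm
        _ = s e := by rw [this]
        _ = v := h
    · refine ⟨φ.symm e + 1, ?_⟩
      have h1 : φ (φ.symm e) = e := Equiv.apply_symm_apply φ e
      calc f (φ.symm e + 1) = t (φ (φ.symm e)) := ((hmain (φ.symm e)).2).symm
        _ = t e := by rw [h1]
        _ = v := h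
  · rintro ⟨f, φ, hf, hφ⟩
    constructor
    · -- connectedness
      set R : V → V → Prop := fun a b => ∃ e : Fin n, s e = a ∧ t e = b with hR
      have hstep : ∀ i : ZMod n, Relation.EqvGen R (f i) (f (i + 1)) := fun i =>
        Relation.EqvGen.rel _ _ ⟨φ i, (hφ i).1, (hφ i).2⟩
      have hnat : ∀ (i : ZMod n) (k : ℕ), Relation.EqvGen R (f i) (f (i + k)) := by
        intro i k
        induction k with
        | zero => simpa using Relation.EqvGen.refl (f i)
        | succ k ih =>
          refine Relation.EqvGen.trans _ _ _ ih ?_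
          have := hstep (i + k)
          rwa [show (i + (k : ZMod n)) + 1 = i + ((k : ℕ) + 1 : ℕ) by push_cast; ring] at this
      intro a b
      obtain ⟨i, rfl⟩ := hf a
      obtain ⟨j, rfl⟩ := hf b
      have := hnat i (j - i).val
      rwa [ZMod.natCast_val, ZMod.cast_id, add_sub_cancel] at this
    · -- balancedness
      intro v
      have h1 : (Finset.univ.filter fun e => t e = v).card =
          (Finset.univ.filter fun i : ZMod n => t (φ i) = v).card := by
        refine (Finset.card_equiv φ ?_).symm
        intro i
        simp
      have h2 : (Finset.univ.filter fun e => s e = v).card =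
          (Finset.univ.filter fun i : ZMod n => s (φ i) = v).card := by
        refine (Finset.card_equiv φ ?_).symm
        intro i
        simp
      rw [h1, h2]
      have h3 : (Finset.univ.filter fun i : ZMod n => t (φ i) = v) =
          (Finset.univ.filter fun i : ZMod n => f (i + 1) = v) := by
        apply Finset.filter_congr
        intro i _
        simp [(hφ i).2]
      have h4 : (Finset.univ.filter fun i : ZMod n => s (φ i) = v) =
          (Finset.univ.filter fun i : ZMod n => f i = v) := by
        apply Finset.filter_congr
        intro i _
        simp [(hφ i).1]
      rw [h3, h4]
      refine Finset.card_equiv (Equiv.addRight 1) ?_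
      intro i
      simp
end

section
/- Let (V, E, s, t) be a balanced directed multigraph and let C ⊆ E be the set of edges of a closed trail. Then the multigraph restricted to the edge set E \ C (with the same vertex set and the restricted source and target maps) is again balanced. -/
private lemma map_t_eq {V E : Type*} (s t : E → V) :
    ∀ (l : List E) (h : l ≠ []), l.Chain' (fun e e' => t e = s e') →
      l.map t = l.tail.map s ++ [t (l.getLast h)]
  | [], h, _ => absurd rfl h
  | [e], _, _ => rfl
  | e :: e' :: l, _, hc => by
    simp only [List.Chain', List.isChain_cons_cons] at hc
    have ih := map_t_eq s t (e' :: l) (by simp) hc.2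
    simp only [List.map_cons, List.tail_cons] at ih ⊢
    rw [ih, hc.1]
    simp [List.getLast]

/-- Removing the edges of a closed trail from a balanced directed multigraph leaves
a balanced multigraph: on the remaining edge set, indegree still equals outdegree
at every vertex. -/
theorem stmt_6 {V E : Type*} [Fintype V] [Nonempty V] [Fintype E]
    [DecidableEq V] [DecidableEq E] (s t : E → V)
    (balanced : ∀ v : V,
      (Finset.univ.filter fun e => t e = v).card =
        (Finset.univ.filter fun e => s e = v).card)
    (L : List E) (hne : L ≠ []) (hnd : L.Nodup)
    (hchain : L.Chain' fun e e' => t e = s e')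
    (hclosed : t (L.getLast hne) = s (L.head hne)) :
    ∀ v : V,
      (Finset.univ.filter fun e => e ∉ L ∧ t e = v).card =
        (Finset.univ.filter fun e => e ∉ L ∧ s e = v).card := by
  intro v
  -- the t-values of L are a permutation of the s-values of L
  have hrot : L.map t = (L.tail ++ [L.head hne]).map s := by
    rw [map_t_eq s t L hne hchain, hclosed, List.map_append]
    rfl
  have hperm : (L.map t).Perm (L.map s) := by
    rw [hrot]
    refine List.Perm.map s ?_
    have h1 : L.tail ++ [L.head hne] = L.rotate 1 := by
      rw [List.rotate_eq_drop_append_take (by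
        cases L with
        | nil => exact absurd rfl hne
        | cons a l => simp)]
      cases L with
      | nil => exact absurd rfl hne
      | cons a l => simp
    rw [h1]
    exact List.rotate_perm L 1
  -- counts inside L agree
  have hin : (L.filter fun e => t e = v).length = (L.filter fun e => s e = v).length := by
    have h1 := hperm.countP_eq (fun w => w = v)
    rw [List.countP_map, List.countP_map] at h1
    rw [← List.countP_eq_length_filter, ← List.countP_eq_length_filter]
    simpa [Function.comp_def] using h1
  -- convert finset cards of in-L filters to list filter lengths
  have key : ∀ f : E → V, (Finset.univ.filter fun e => e ∈ L ∧ f e = v) =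
      (L.filter fun e => f e = v).toFinset := by
    intro f
    ext e
    simp [List.mem_filter, and_comm]
  have hsplit : ∀ f : E → V,
      (Finset.univ.filter fun e => f e = v).card =
        (Finset.univ.filter fun e => e ∈ L ∧ f e = v).card +
          (Finset.univ.filter fun e => e ∉ L ∧ f e = v).card := by
    intro f
    have := Finset.card_filter_add_card_filter_not
      (s := Finset.univ.filter fun e => f e = v) (p := fun e => e ∈ L)
    rw [Finset.filter_filter, Finset.filter_filter] at this
    rw [← this]
    congr 1 <;> apply Finset.card_bij (fun a _ => a) <;>
      simp (config := {contextual := true}) [and_comm]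
  have hcardt : (Finset.univ.filter fun e => e ∈ L ∧ t e = v).card =
      (L.filter fun e => t e = v).length := by
    rw [key t, List.toFinset_card_of_nodup (hnd.filter _)]
  have hcards : (Finset.univ.filter fun e => e ∈ L ∧ s e = v).card =
      (L.filter fun e => s e = v).length := by
    rw [key s, List.toFinset_card_of_nodup (hnd.filter _)]
  have hbt := hsplit t
  have hbs := hsplit s
  rw [hcardt, hin] at hbt
  rw [hcards] at hbs
  have hb := balanced v
  omega
end

section
/- In a balanced directed multigraph, if e₁, …, eₙ is a trail from v = s e₁ to u = t eₙ with u ≠ v, then there exists an edge e not among e₁, …, eₙ with s e = u. (A walk that never repeats edges can always leave any vertex it reaches, other than its starting vertex; hence a maximal trail must end where it began.) -/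
private lemma aux_count {V E : Type*} [DecidableEq V] (s t : E → V) (u : V) :
    ∀ (L : List E) (hne : L ≠ []), L.Chain' (fun e e' => t e = s e') →
      L.countP (fun e => decide (t e = u)) + (if s (L.head hne) = u then 1 else 0)
        = L.countP (fun e => decide (s e = u)) + (if t (L.getLast hne) = u then 1 else 0) := by
  intro L
  induction L with
  | nil => simp
  | cons e rest ih =>
    intro hne hchain
    cases rest with
    | nil =>
      simp only [List.countP_cons, List.countP_nil, List.head_cons, List.getLast_singleton]
      by_cases h1 : t e = u <;> by_cases h2 : s e = u <;> simp [h1, h2]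
    | cons e' rest' =>
      have hlink : t e = s e' := hchain.rel_head
      have htail := ih (by simp) hchain.tail
      simp only [List.head_cons] at htail ⊢
      rw [List.getLast_cons (by simp)]
      simp only [List.countP_cons, decide_eq_true_eq] at htail ⊢
      rw [hlink]
      split_ifs at htail ⊢ <;> simp_all <;> omega

/-- In a balanced directed multigraph, a trail from `v` to `u ≠ v` can always be
extended: there is an edge not used by the trail whose source is `u`. -/
theorem stmt_7 {V E : Type*} [Fintype V] [Nonempty V] [Fintype E]
    [DecidableEq V] [DecidableEq E] (s t : E → V)
    (balanced : ∀ v : V,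
      (Finset.univ.filter fun e => t e = v).card =
        (Finset.univ.filter fun e => s e = v).card)
    (L : List E) (hne : L ≠ []) (hnd : L.Nodup)
    (hchain : L.Chain' fun e e' => t e = s e')
    (u v : V) (hv : s (L.head hne) = v) (hu : t (L.getLast hne) = u)
    (huv : u ≠ v) :
    ∃ e : E, e ∉ L ∧ s e = u := by
  by_contra h
  push_neg at h
  have hmem : ∀ e : E, s e = u → e ∈ L := by
    intro e he
    by_contra hnot
    exact (h e hnot) he
  have key := aux_count s t u L hne hchain
  rw [hv, hu] at key
  rw [if_neg (show ¬ v = u from fun hh => huv hh.symm), if_pos rfl] at key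
  -- key : countP (t = u) + 0 = countP (s = u) + 1
  have gen : ∀ f : E → V, L.countP (fun e => decide (f e = u))
      = (L.toFinset.filter fun e => f e = u).card := by
    intro f
    have heq : (L.filter (fun e => decide (f e = u))).toFinset
        = L.toFinset.filter (fun e => f e = u) := by
      ext x; simp
    rw [← heq, List.card_toFinset, (hnd.filter _).dedup,
      List.countP_eq_length_filter]
  have hcount_t := gen t
  have hcount_s := gen s
  have hsub_t : (L.toFinset.filter fun e => t e = u) ⊆ Finset.univ.filter fun e => t e = u := by
    intro e he
    simp only [Finset.mem_filter] at he ⊢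
    exact ⟨Finset.mem_univ e, he.2⟩
  have hsub_s : (Finset.univ.filter fun e => s e = u) ⊆ L.toFinset.filter fun e => s e = u := by
    intro e he
    simp only [Finset.mem_filter, List.mem_toFinset] at he ⊢
    exact ⟨hmem e he.2, he.2⟩
  have h1 := Finset.card_le_card hsub_t
  have h2 := Finset.card_le_card hsub_s
  rw [← hcount_t] at h1
  rw [← hcount_s] at h2
  have := balanced u
  omega
end

section
/- A finite directed multigraph (V, E, s, t) is balanced if and only if there exists a permutation π of the edge set E such that s (π e) = t e for every edge e. (Such a permutation is exactly an edge assignment matching incoming to outgoing edges at every node; its cycles decompose the quiver into disjoint loops.) -/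
/-- A finite directed multigraph is balanced if and only if there is a permutation
`π` of the edges with `s (π e) = t e` for every edge `e` (an edge assignment
matching incoming to outgoing edges at every node). -/
theorem stmt_8 {V E : Type*} [Fintype V] [Nonempty V] [Fintype E] [DecidableEq V]
    (s t : E → V) :
    (∀ v : V,
      (Finset.univ.filter fun e => t e = v).card =
        (Finset.univ.filter fun e => s e = v).card) ↔
    ∃ π : Equiv.Perm E, ∀ e : E, s (π e) = t e := by
  classical
  constructor
  · intro h
    have hcard : ∀ v, Fintype.card {e // t e = v} = Fintype.card {e // s e = v} := by
      intro v
      simp only [Fintype.card_subtype]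
      exact h v
    have σ : ∀ v, {e // t e = v} ≃ {e // s e = v} :=
      fun v => (Fintype.card_eq.mp (hcard v)).some
    refine ⟨(Equiv.sigmaFiberEquiv t).symm.trans
      ((Equiv.sigmaCongrRight σ).trans (Equiv.sigmaFiberEquiv s)), ?_⟩
    intro e
    exact (σ (t e) ⟨e, rfl⟩).2
  · rintro ⟨π, hπ⟩ v
    rw [← Fintype.card_subtype, ← Fintype.card_subtype]
    exact Fintype.card_congr (Equiv.subtypeEquiv π (fun e => by rw [hπ e]))
end

section
/- Let σ be a finite type and let P and Q be two partitions of σ into nonempty parts (each is a family of pairwise disjoint nonempty subsets of σ whose union is σ) having no part in common. Then the polynomial W = Σ_{p ∈ P} Π_{i ∈ p} Xᵢ − Σ_{q ∈ Q} Π_{i ∈ q} Xᵢ in MvPolynomial σ ℤ has exactly |P| + |Q| monomials in its support, every monomial in its support is squarefree, every coefficient is +1 or −1, and every variable Xᵢ occurs in exactly two monomials of the support, once with coefficient +1 and once with coefficient −1; that is, W satisfies the toric condition. -/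
open MvPolynomial in
/-- Given two partitions `P`, `Q` of a finite type `σ` into nonempty parts with no
part in common, the polynomial `W = Σ_{p ∈ P} Π_{i ∈ p} Xᵢ − Σ_{q ∈ Q} Π_{i ∈ q} Xᵢ`
has exactly `|P| + |Q|` monomials in its support, every monomial in its support is
squarefree, every coefficient is `+1` or `−1`, and every variable occurs in exactly
two monomials of the support, once with coefficient `+1` and once with coefficient
`−1`: `W` satisfies the toric condition. -/
theorem stmt_9 {σ : Type*} [Fintype σ] [DecidableEq σ]
    (P Q : Finset (Finset σ))
    (hPpart : ∀ i : σ, ∃! p, p ∈ P ∧ i ∈ p) (hPne : ∀ p ∈ P, p.Nonempty)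
    (hQpart : ∀ i : σ, ∃! q, q ∈ Q ∧ i ∈ q) (hQne : ∀ q ∈ Q, q.Nonempty)
    (hPQ : ∀ p ∈ P, p ∉ Q)
    (W : MvPolynomial σ ℤ)
    (hW : W = (∑ p ∈ P, ∏ i ∈ p, X i) - ∑ q ∈ Q, ∏ i ∈ q, X i) :
    W.support.card = P.card + Q.card ∧
    (∀ m ∈ W.support, ∀ i : σ, m i ≤ 1) ∧
    (∀ m ∈ W.support, W.coeff m = 1 ∨ W.coeff m = -1) ∧
    (∀ i : σ, ∃ m₁ ∈ W.support, ∃ m₂ ∈ W.support,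
      0 < m₁ i ∧ 0 < m₂ i ∧ W.coeff m₁ = 1 ∧ W.coeff m₂ = -1 ∧
      ∀ m ∈ W.support, 0 < m i → m = m₁ ∨ m = m₂) := by
  classical
  set e : Finset σ → (σ →₀ ℕ) := fun p => ∑ i ∈ p, Finsupp.single i 1 with he
  have heval : ∀ p (j : σ), e p j = if j ∈ p then 1 else 0 := by
    intro p j
    simp only [he, Finsupp.finset_sum_apply, Finsupp.single_apply]
    simp [Finset.sum_ite_eq' p j (fun _ => 1)]
  have hinj : Function.Injective e := by
    intro p q h
    ext j
    have := congrArg (fun f => f j) h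
    simp only [heval] at this
    by_cases hj : j ∈ p <;> by_cases hj' : j ∈ q <;> simp_all
  have hprod : ∀ p : Finset σ, (∏ i ∈ p, (X i : MvPolynomial σ ℤ)) = monomial (e p) 1 := by
    intro p
    calc ∏ i ∈ p, (X i : MvPolynomial σ ℤ)
        = ∏ i ∈ p, monomial (Finsupp.single i 1) 1 := rfl
      _ = monomial (∑ i ∈ p, Finsupp.single i 1) 1 := (monomial_sum_one p _).symm
      _ = monomial (e p) 1 := rfl
  -- coefficients
  have hcoeff : ∀ m, W.coeff m =
      (if m ∈ P.image e then 1 else 0) - (if m ∈ Q.image e then 1 else 0) := by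
    intro m
    have key : ∀ S : Finset (Finset σ), coeff m (∑ p ∈ S, ∏ i ∈ p, (X i : MvPolynomial σ ℤ))
        = if m ∈ S.image e then 1 else 0 := by
      intro S
      rw [coeff_sum]
      have : ∀ p ∈ S, coeff m (∏ i ∈ p, (X i : MvPolynomial σ ℤ)) =
          if e p = m then 1 else 0 := by
        intro p _
        rw [hprod, coeff_monomial]
      rw [Finset.sum_congr rfl this]
      have h2 := Finset.sum_image (s := S) (g := e)
        (f := fun m' : σ →₀ ℕ => if m' = m then (1:ℤ) else 0) (fun x _ y _ h => hinj h)
      rw [← h2]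
      simp [Finset.sum_ite_eq' (S.image e) m]
    rw [hW, coeff_sub, key, key]
  have hdisj : ∀ m, ¬(m ∈ P.image e ∧ m ∈ Q.image e) := by
    rintro m ⟨hp, hq⟩
    obtain ⟨p, hpP, rfl⟩ := Finset.mem_image.1 hp
    obtain ⟨q, hqQ, hqe⟩ := Finset.mem_image.1 hq
    exact hPQ p hpP (hinj hqe ▸ hqQ)
  have hsupp : W.support = P.image e ∪ Q.image e := by
    ext m
    simp only [MvPolynomial.mem_support_iff, hcoeff, Finset.mem_union]
    by_cases hp : m ∈ P.image e <;> by_cases hq : m ∈ Q.image e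
    · exact absurd ⟨hp, hq⟩ (hdisj m)
    · rw [if_pos hp, if_neg hq]; constructor
      · intro _; exact Or.inl hp
      · intro _; norm_num
    · rw [if_neg hp, if_pos hq]; constructor
      · intro _; exact Or.inr hq
      · intro _; norm_num
    · rw [if_neg hp, if_neg hq]
      constructor
      · intro h; norm_num at h
      · rintro (h | h)
        exacts [absurd h hp, absurd h hq]
  have hcP : ∀ m ∈ P.image e, W.coeff m = 1 := by
    intro m hm
    rw [hcoeff, if_pos hm, if_neg (fun h => hdisj m ⟨hm, h⟩)]
    norm_num
  have hcQ : ∀ m ∈ Q.image e, W.coeff m = -1 := by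
    intro m hm
    rw [hcoeff, if_neg (fun h => hdisj m ⟨h, hm⟩), if_pos hm]
    norm_num
  refine ⟨?_, ?_, ?_, ?_⟩
  · rw [hsupp, Finset.card_union_of_disjoint, Finset.card_image_of_injective _ hinj,
      Finset.card_image_of_injective _ hinj]
    rw [Finset.disjoint_left]
    exact fun m hp hq => hdisj m ⟨hp, hq⟩
  · intro m hm i
    rw [hsupp, Finset.mem_union] at hm
    rcases hm with h | h <;> obtain ⟨p, _, rfl⟩ := Finset.mem_image.1 h <;>
      rw [heval] <;> split <;> simp
  · intro m hm
    rw [hsupp, Finset.mem_union] at hm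
    rcases hm with h | h
    · exact Or.inl (hcP m h)
    · exact Or.inr (hcQ m h)
  · intro i
    obtain ⟨p, ⟨hpP, hip⟩, hpu⟩ := hPpart i
    obtain ⟨q, ⟨hqQ, hiq⟩, hqu⟩ := hQpart i
    have hm1 : e p ∈ P.image e := Finset.mem_image_of_mem _ hpP
    have hm2 : e q ∈ Q.image e := Finset.mem_image_of_mem _ hqQ
    refine ⟨e p, ?_, e q, ?_, ?_, ?_, hcP _ hm1, hcQ _ hm2, ?_⟩
    · rw [hsupp]; exact Finset.mem_union_left _ hm1
    · rw [hsupp]; exact Finset.mem_union_right _ hm2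
    · rw [heval]; simp [hip]
    · rw [heval]; simp [hiq]
    · intro m hm hmi
      rw [hsupp, Finset.mem_union] at hm
      rcases hm with h | h
      · obtain ⟨p', hp', rfl⟩ := Finset.mem_image.1 h
        left
        have : i ∈ p' := by
          by_contra hc
          rw [heval] at hmi; simp [hc] at hmi
        rw [hpu p' ⟨hp', this⟩]
      · obtain ⟨q', hq', rfl⟩ := Finset.mem_image.1 h
        right
        have : i ∈ q' := by
          by_contra hc
          rw [heval] at hmi; simp [hc] at hmi
        rw [hqu q' ⟨hq', this⟩]
end
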